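/- For all integers n ≥ 1 and t ≥ 0, s*(n,2,t) = 2^n · Σ_{i=0}^{t} C(n,i). That is: if 𝓕_1, 𝓕_2 are families of subsets of [n] with |F1 ∩ F2| ≤ t for all F1 ∈ 𝓕_1 and F2 ∈ 𝓕_2, then |𝓕_1|·|𝓕_2| ≤ 2^n · Σ_{i=0}^{t} C(n,i), and this bound is attained by some such pair of families. -/
import Mathlib

open Finset

lemma keylem (M M' u v : ℕ) (hu : u ≤ M) (hv : v ≤ M) (huv : u * v ≤ M * M') :
    u + v ≤ M + M' := by
  rcases Nat.eq_zero_or_pos M with h | h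
  · omega
  · have h2 : M * (u + v) ≤ M * (M + M') := by nlinarith
    exact Nat.le_of_mul_le_mul_left h2 h

lemma pascal_sum (s k : ℕ) :
    ∑ i ∈ range (k + 1), (s + 1).choose i
      = ∑ i ∈ range (k + 1), s.choose i + ∑ i ∈ range k, s.choose i := by
  induction k with
  | zero => simp
  | succ k ih =>
      rw [sum_range_succ, ih, Nat.choose_succ_succ,
        sum_range_succ (f := fun i => s.choose i) (n := k + 1),
        sum_range_succ (f := fun i => s.choose i) (n := k)]
      simp only [Nat.succ_eq_add_one]
      omega

lemma main_bound {α : Type*} [DecidableEq α] (S : Finset α) :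
    ∀ (t : ℕ) (F1 F2 : Finset (Finset α)),
      F1 ⊆ S.powerset → F2 ⊆ S.powerset →
      (∀ A ∈ F1, ∀ B ∈ F2, (A ∩ B).card ≤ t) →
      F1.card * F2.card ≤ 2 ^ S.card * ∑ i ∈ range (t + 1), S.card.choose i := by
  classical
  induction S using Finset.induction with
  | empty =>
      intro t F1 F2 h1 h2 _
      have hc1 : F1.card ≤ 1 := by
        have := card_le_card h1; simpa using this
      have hc2 : F2.card ≤ 1 := by
        have := card_le_card h2; simpa using this
      have : 1 ≤ ∑ i ∈ range (t + 1), (0 : ℕ).choose i := by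
        calc 1 = (0:ℕ).choose 0 := rfl
          _ ≤ _ := single_le_sum (f := fun i => (0:ℕ).choose i)
                (fun _ _ => Nat.zero_le _) (by simp)
      calc F1.card * F2.card ≤ 1 * 1 := Nat.mul_le_mul hc1 hc2
        _ ≤ 2 ^ (∅:Finset α).card * ∑ i ∈ range (t + 1), (∅:Finset α).card.choose i := by
            simpa using this
  | @insert x S hx ih =>
      intro t F1 F2 h1 h2 hcross
      set s := S.card with hs
      -- split the families
      set A0 : Finset (Finset α) := F1.filter (fun A => x ∉ A) with hA0
      set A1 : Finset (Finset α) := (F1.filter (fun A => x ∈ A)).image (fun A => A.erase x) with hA1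
      set B0 : Finset (Finset α) := F2.filter (fun A => x ∉ A) with hB0
      set B1 : Finset (Finset α) := (F2.filter (fun A => x ∈ A)).image (fun A => A.erase x) with hB1
      have hinj : ∀ (F : Finset (Finset α)),
          ((F.filter (fun A => x ∈ A)).image (fun A => A.erase x)).card
            = (F.filter (fun A => x ∈ A)).card := by
        intro F
        apply card_image_of_injOn
        intro A hA B hB hAB
        simp only [mem_coe, mem_filter] at hA hB
        have hAB' : A.erase x = B.erase x := hAB
        have : insert x (A.erase x) = insert x (B.erase x) := by rw [hAB']
        rwa [insert_erase hA.2, insert_erase hB.2] at this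
      have hcard1 : F1.card = A0.card + A1.card := by
        rw [hA0, hA1, hinj F1]
        rw [Nat.add_comm]
        exact (card_filter_add_card_filter_not (p := fun A => x ∈ A)).symm
      have hcard2 : F2.card = B0.card + B1.card := by
        rw [hB0, hB1, hinj F2]
        rw [Nat.add_comm]
        exact (card_filter_add_card_filter_not (p := fun A => x ∈ A)).symm
      -- subset facts
      have hsub : ∀ A ∈ F1, A ⊆ insert x S := fun A hA => mem_powerset.1 (h1 hA)
      have hsub' : ∀ A ∈ F2, A ⊆ insert x S := fun A hA => mem_powerset.1 (h2 hA)
      have hA0S : A0 ⊆ S.powerset := by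
        intro A hA
        simp only [hA0, mem_filter] at hA
        rw [mem_powerset]
        intro y hy
        rcases mem_insert.1 (hsub A hA.1 hy) with h | h
        · exact absurd (h ▸ hy) hA.2
        · exact h
      have hB0S : B0 ⊆ S.powerset := by
        intro A hA
        simp only [hB0, mem_filter] at hA
        rw [mem_powerset]
        intro y hy
        rcases mem_insert.1 (hsub' A hA.1 hy) with h | h
        · exact absurd (h ▸ hy) hA.2
        · exact h
      have hA1S : A1 ⊆ S.powerset := by
        intro A hA
        simp only [hA1, mem_image, mem_filter] at hA
        obtain ⟨A', ⟨hA', hxA'⟩, rfl⟩ := hA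
        rw [mem_powerset]
        intro y hy
        have hyx : y ≠ x := ne_of_mem_erase hy
        rcases mem_insert.1 (hsub A' hA' (mem_of_mem_erase hy)) with h | h
        · exact absurd h hyx
        · exact h
      have hB1S : B1 ⊆ S.powerset := by
        intro A hA
        simp only [hB1, mem_image, mem_filter] at hA
        obtain ⟨A', ⟨hA', hxA'⟩, rfl⟩ := hA
        rw [mem_powerset]
        intro y hy
        have hyx : y ≠ x := ne_of_mem_erase hy
        rcases mem_insert.1 (hsub' A' hA' (mem_of_mem_erase hy)) with h | h
        · exact absurd h hyx
        · exact h
      -- cross bounds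
      have h00 : A0.card * B0.card ≤ 2 ^ s * ∑ i ∈ range (t + 1), s.choose i := by
        apply ih t A0 B0 hA0S hB0S
        intro A hA B hB
        simp only [hA0, mem_filter] at hA
        simp only [hB0, mem_filter] at hB
        exact hcross A hA.1 B hB.1
      have h01 : A0.card * B1.card ≤ 2 ^ s * ∑ i ∈ range (t + 1), s.choose i := by
        apply ih t A0 B1 hA0S hB1S
        intro A hA B hB
        simp only [hA0, mem_filter] at hA
        simp only [hB1, mem_image, mem_filter] at hB
        obtain ⟨B', ⟨hB', _⟩, rfl⟩ := hB
        calc (A ∩ B'.erase x).card ≤ (A ∩ B').card :=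
              card_le_card (inter_subset_inter (le_refl _) (erase_subset _ _))
          _ ≤ t := hcross A hA.1 B' hB'
      have h10 : A1.card * B0.card ≤ 2 ^ s * ∑ i ∈ range (t + 1), s.choose i := by
        apply ih t A1 B0 hA1S hB0S
        intro A hA B hB
        simp only [hA1, mem_image, mem_filter] at hA
        simp only [hB0, mem_filter] at hB
        obtain ⟨A', ⟨hA', _⟩, rfl⟩ := hA
        calc (A'.erase x ∩ B).card ≤ (A' ∩ B).card :=
              card_le_card (inter_subset_inter (erase_subset _ _) (le_refl _))
          _ ≤ t := hcross A' hA' B hB.1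
      have h11 : A1.card * B1.card ≤ 2 ^ s * ∑ i ∈ range t, s.choose i := by
        cases t with
        | zero =>
            have : A1.card * B1.card = 0 := by
              rw [Nat.mul_eq_zero]
              by_contra hcon
              push_neg at hcon
              obtain ⟨h1', h2'⟩ := hcon
              obtain ⟨A, hA⟩ := card_pos.1 (Nat.pos_of_ne_zero h1')
              obtain ⟨B, hB⟩ := card_pos.1 (Nat.pos_of_ne_zero h2')
              simp only [hA1, mem_image, mem_filter] at hA
              simp only [hB1, mem_image, mem_filter] at hB
              obtain ⟨A', ⟨hA', hxA'⟩, rfl⟩ := hA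
              obtain ⟨B', ⟨hB', hxB'⟩, rfl⟩ := hB
              have hle := hcross A' hA' B' hB'
              have : x ∈ A' ∩ B' := mem_inter.2 ⟨hxA', hxB'⟩
              have := card_pos.2 ⟨x, this⟩
              omega
            simp [this]
        | succ t' =>
            apply ih t' A1 B1 hA1S hB1S
            intro A hA B hB
            simp only [hA1, mem_image, mem_filter] at hA
            simp only [hB1, mem_image, mem_filter] at hB
            obtain ⟨A', ⟨hA', hxA'⟩, rfl⟩ := hA
            obtain ⟨B', ⟨hB', hxB'⟩, rfl⟩ := hB
            have h1'' : A'.erase x ∩ B'.erase x = (A' ∩ B').erase x := by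
              ext y; simp [mem_erase, mem_inter]; tauto
            have hle := hcross A' hA' B' hB'
            have hxm : x ∈ A' ∩ B' := mem_inter.2 ⟨hxA', hxB'⟩
            rw [h1'', card_erase_of_mem hxm]
            omega
      -- combine
      have hmid : A0.card * B1.card + A1.card * B0.card
          ≤ 2 ^ s * ∑ i ∈ range (t + 1), s.choose i + 2 ^ s * ∑ i ∈ range t, s.choose i := by
        apply keylem _ _ _ _ h01 h10
        calc A0.card * B1.card * (A1.card * B0.card)
            = A0.card * B0.card * (A1.card * B1.card) := by ring
          _ ≤ _ := Nat.mul_le_mul h00 h11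
      have htotal : F1.card * F2.card
          ≤ 2 * (2 ^ s * ∑ i ∈ range (t + 1), s.choose i)
            + 2 * (2 ^ s * ∑ i ∈ range t, s.choose i) := by
        rw [hcard1, hcard2]
        have : (A0.card + A1.card) * (B0.card + B1.card)
            = A0.card * B0.card + (A0.card * B1.card + A1.card * B0.card)
              + A1.card * B1.card := by ring
        rw [this]
        omega
      have hceq : (insert x S).card = s + 1 := by
        rw [card_insert_of_notMem hx]
      rw [hceq, pascal_sum s t]
      calc F1.card * F2.card ≤ _ := htotal
        _ = 2 ^ (s + 1) * (∑ i ∈ range (t + 1), s.choose i + ∑ i ∈ range t, s.choose i) := by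
            ring

theorem sStar_two_families (n t : ℕ) (hn : 1 ≤ n) :
    IsGreatest
      {P : ℕ | ∃ F1 F2 : Finset (Finset (Fin n)),
        (∀ A ∈ F1, ∀ B ∈ F2, (A ∩ B).card ≤ t) ∧
        P = F1.card * F2.card}
      (2 ^ n * ∑ i ∈ Finset.range (t + 1), n.choose i) := by
  constructor
  · -- membership: attained
    refine ⟨Finset.univ, (Finset.range (t + 1)).biUnion
        (fun i => (Finset.univ : Finset (Fin n)).powersetCard i), ?_, ?_⟩
    · intro A _ B hB
      simp only [Finset.mem_biUnion, Finset.mem_range, Finset.mem_powersetCard] at hB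
      obtain ⟨i, hi, _, hcard⟩ := hB
      calc (A ∩ B).card ≤ B.card := Finset.card_le_card (Finset.inter_subset_right)
        _ = i := hcard
        _ ≤ t := by omega
    · have hcu : (Finset.univ : Finset (Finset (Fin n))).card = 2 ^ n := by
        rw [Finset.card_univ, Fintype.card_finset, Fintype.card_fin]
      have hcb : ((Finset.range (t + 1)).biUnion
          (fun i => (Finset.univ : Finset (Fin n)).powersetCard i)).card
            = ∑ i ∈ Finset.range (t + 1), n.choose i := by
        rw [Finset.card_biUnion]
        · apply Finset.sum_congr rfl
          intro i _
          rw [Finset.card_powersetCard, Finset.card_univ, Fintype.card_fin]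
        · intro i _ j _ hij
          apply Finset.disjoint_left.2
          intro B hBi hBj
          rw [Finset.mem_powersetCard] at hBi hBj
          exact hij (hBi.2.symm.trans hBj.2)
      rw [hcu, hcb]
  · -- upper bound
    intro P hP
    obtain ⟨F1, F2, hcross, rfl⟩ := hP
    have h1 : F1 ⊆ (Finset.univ : Finset (Fin n)).powerset := by
      intro A _; simp [Finset.mem_powerset]
    have h2 : F2 ⊆ (Finset.univ : Finset (Fin n)).powerset := by
      intro A _; simp [Finset.mem_powerset]
    have := main_bound (Finset.univ : Finset (Fin n)) t F1 F2 h1 h2 hcross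
    simpa using this
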